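/- If R is a G-Noetherian ring, then the polynomial ring R[X], where G acts on coefficients only (fixing X), is G-Noetherian. -/

import Mathlib

/-- A commutative ring with an action `act : G → R → R` is `G`-Noetherian if every
ascending chain of `G`-stable ideals stabilises. -/
def IsRingGNoetherian {G R : Type*} [CommRing R] (act : G → R → R) : Prop :=
  ∀ I : ℕ → Ideal R,
    (∀ n, I n ≤ I (n + 1)) →
    (∀ n g x, x ∈ I n → act g x ∈ I n) →
    ∃ m, ∀ n, m ≤ n → I n = I m

open Polynomial

/-- if `R` is `G`-Noetherian then so is `R[X]`, with `G` acting
coefficientwise (fixing `X`). -/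
theorem ringGNoetherian_polynomial
    {G R : Type*} [Group G] [CommRing R] [MulSemiringAction G R]
    (hR : IsRingGNoetherian (fun (g : G) (r : R) => g • r)) :
    IsRingGNoetherian
      (fun (g : G) (p : Polynomial R) => p.map (MulSemiringAction.toRingHom G R g)) := by
  intro I hIchain hIstab
  -- monotonicity of the chain
  have hImono : ∀ {m n : ℕ}, m ≤ n → I m ≤ I n := by
    intro m n h
    exact monotone_nat_of_le_succ hIchain h
  set J : ℕ → ℕ → Ideal R := fun n d => (I n).leadingCoeffNth d with hJ
  have hJmono : ∀ {n n' d d' : ℕ}, n ≤ n' → d ≤ d' → J n d ≤ J n' d' := by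
    intro n n' d d' hn hd x hx
    rw [hJ, Ideal.mem_leadingCoeffNth] at hx ⊢
    obtain ⟨p, hp, hdeg, hlc⟩ := hx
    exact ⟨p, hImono hn hp, le_trans hdeg (by exact_mod_cast hd), hlc⟩
  have hinj : ∀ g : G, Function.Injective (MulSemiringAction.toRingHom G R g) := by
    intro g
    exact MulAction.injective g
  have hJstab : ∀ (n d : ℕ) (g : G) (x : R), x ∈ J n d → g • x ∈ J n d := by
    intro n d g x hx
    rw [hJ, Ideal.mem_leadingCoeffNth] at hx ⊢
    obtain ⟨p, hp, hdeg, hlc⟩ := hx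
    refine ⟨p.map (MulSemiringAction.toRingHom G R g), hIstab n g p hp, ?_, ?_⟩
    · rwa [degree_map_eq_of_injective (hinj g)]
    · rw [leadingCoeff_map_of_injective (hinj g), hlc]; rfl
  -- stabilise each row (fixed degree d)
  have hrow : ∀ d : ℕ, ∃ m, ∀ n, m ≤ n → J n d = J m d := by
    intro d
    exact hR (fun n => J n d) (fun n => hJmono (Nat.le_succ n) le_rfl)
      (fun n g x hx => hJstab n d g x hx)
  choose Nd hNd using hrow
  -- stabilise the diagonal
  obtain ⟨N, hN⟩ := hR (fun n => J n n)
    (fun n => hJmono (Nat.le_succ n) (Nat.le_succ n))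
    (fun n g x hx => hJstab n n g x hx)
  set M : ℕ := N ⊔ (Finset.range N).sup Nd with hM
  have hNM : N ≤ M := le_sup_left
  -- all leading coefficient ideals stabilise simultaneously at M
  have key : ∀ n d : ℕ, M ≤ n → J n d = J M d := by
    intro n d hn
    rcases lt_or_ge d N with hd | hd
    · have h1 : Nd d ≤ M := le_trans (Finset.le_sup (Finset.mem_range.2 hd)) le_sup_right
      rw [hNd d n (le_trans h1 hn), hNd d M h1]
    · have diag : ∀ k d' : ℕ, N ≤ k → N ≤ d' → J k d' = J N N := by
        intro k d' hk hd'
        refine le_antisymm ?_ (hJmono hk hd')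
        have h1 : J k d' ≤ J (max k d') (max k d') :=
          hJmono (le_max_left _ _) (le_max_right _ _)
        have h2 : J (max k d') (max k d') = J N N :=
          hN (max k d') (le_trans hk (le_max_left _ _))
        exact h1.trans h2.le
      rw [diag n d (le_trans hNM hn) hd, diag M d hNM hd]
  refine ⟨M, fun n hn => le_antisymm ?_ (hImono hn)⟩
  -- show I n ≤ I M by induction on degree
  have main : ∀ d : ℕ, ∀ p ∈ I n, p.degree < (d : WithBot ℕ) → p ∈ I M := by
    intro d
    induction d with
    | zero =>
      intro p hp hdeg
      have : p = 0 := by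
        rw [← degree_eq_bot]
        exact Nat.WithBot.lt_zero_iff.mp hdeg
      simp [this]
    | succ d ih =>
      intro p hp hdeg
      by_cases hp0 : p = 0
      · simp [hp0]
      have : Nontrivial R := by
        rcases subsingleton_or_nontrivial R with h | h
        · exact absurd (Subsingleton.elim p 0) hp0
        · exact h
      have hnd : p.natDegree ≤ d :=
        Nat.lt_succ_iff.mp ((natDegree_lt_iff_degree_lt hp0).mpr (by exact_mod_cast hdeg))
      have hdegle : p.degree ≤ (d : WithBot ℕ) :=
        degree_le_natDegree.trans (by exact_mod_cast hnd)
      have hlcmem : p.leadingCoeff ∈ J n p.natDegree := by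
        rw [hJ, Ideal.mem_leadingCoeffNth]
        exact ⟨p, hp, degree_le_natDegree, rfl⟩
      rw [key n p.natDegree hn] at hlcmem
      rw [hJ, Ideal.mem_leadingCoeffNth] at hlcmem
      obtain ⟨q, hq, hqdeg, hqlc⟩ := hlcmem
      have hq0 : q ≠ 0 := by
        intro h
        apply hp0
        rw [h, leadingCoeff_zero] at hqlc
        exact leadingCoeff_eq_zero.mp hqlc.symm
      have hqnd : q.natDegree ≤ p.natDegree := natDegree_le_iff_degree_le.mpr hqdeg
      set q' : R[X] := q * X ^ (p.natDegree - q.natDegree) with hq'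
      have hq'mem : q' ∈ I M := Ideal.mul_mem_right _ _ hq
      have hq'nd : q'.natDegree = p.natDegree := by
        rw [hq', natDegree_mul_X_pow _ hq0, Nat.add_sub_cancel' hqnd]
      have hq'lc : q'.leadingCoeff = p.leadingCoeff := by
        rw [hq', leadingCoeff_mul_X_pow, hqlc]
      have hq'0 : q' ≠ 0 := fun h => hq0 (by
        have := hq'lc
        rw [h, leadingCoeff_zero] at this
        exact leadingCoeff_eq_zero.mp (hqlc.trans this.symm ▸ hqlc.symm ▸ hqlc))
      have hdegeq : p.degree = q'.degree := by
        rw [degree_eq_natDegree hp0, degree_eq_natDegree hq'0, hq'nd]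
      have hsub : (p - q').degree < p.degree :=
        degree_sub_lt hdegeq hp0 hq'lc.symm
      have hsubmem : p - q' ∈ I n := Ideal.sub_mem _ hp (hImono hn hq'mem)
      have hsubdeg : (p - q').degree < (d : WithBot ℕ) :=
        lt_of_lt_of_le hsub hdegle
      have : p - q' ∈ I M := ih (p - q') hsubmem hsubdeg
      have : p - q' + q' ∈ I M := Ideal.add_mem _ this hq'mem
      simpa using this
  intro p hp
  exact main (p.natDegree + 1) p hp
    (lt_of_le_of_lt degree_le_natDegree (by exact_mod_cast Nat.lt_succ_self _))
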